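/- Home Penalized Deferred Acceptance is weakly non-wasteful: if every home accepts every placement it is offered, then at no time t do there exist an active child c and active home h with U_c(h) ≥ 0, V_h(c) ≥ 0, μ_t(c) = c, and μ_t(h) = h. -/
import Mathlib


/-- A one-to-one (partial) matching between children and homes. -/
structure Matching (C H : Type) where
  toHome : C → Option H
  toChild : H → Option C
  consistent : ∀ c h, toHome c = some h ↔ toChild h = some c

/-- A dynamic matching market: cardinal utilities, arrival times, waiting costs. -/
structure Market (C H : Type) where
  U : C → H → ℝ
  V : H → C → ℝ
  arrC : C → ℕ
  arrH : H → ℕ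
  wC : ℝ
  wH : ℝ

/-- Accept/reject action profiles of homes over time. -/
abbrev Actions (H : Type) := H → ℕ → Bool

/-- A dynamic mechanism: given the homes' action profile, a matching in each period. -/
abbrev Mechanism (C H : Type) := Actions H → ℕ → Matching C H

open scoped Classical in
/-- The counterfactual profile in which home `h` rejects every placement before `t'`,
accepts at `t'`, and otherwise plays as in `a`; all other homes play as in `a`. -/
noncomputable def cfProfile {H : Type} (a : Actions H) (h : H) (t' : ℕ) : Actions H :=
  fun h' k =>
    if h' = h then (if k < t' then false else if k = t' then true else a h' k)
    else a h' k

namespace Market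

variable {C H : Type}

/-- Time-discounted utility of home `h` for child `c` at time `t`:
`V_h^t(c) = V_h(c) - (t - arrival(h)) * w_H`. -/
noncomputable def Vt (M : Market C H) (h : H) (c : C) (t : ℕ) : ℝ :=
  M.V h c - ((t : ℝ) - (M.arrH h : ℝ)) * M.wH

/-- Child `c` is active (present in the market) at time `t`:
she has arrived and no home has yet accepted a placement with her. -/
def activeC (M : Market C H) (Q : Mechanism C H) (a : Actions H) (c : C) (t : ℕ) : Prop :=
  M.arrC c ≤ t ∧ ¬ ∃ k < t, ∃ h, (Q a k).toHome c = some h ∧ a h k = true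

/-- Home `h` is active (present in the market) at time `t`:
it has arrived and has not yet accepted a placement. -/
def activeH (M : Market C H) (Q : Mechanism C H) (a : Actions H) (h : H) (t : ℕ) : Prop :=
  M.arrH h ≤ t ∧ ¬ ∃ k < t, (Q a k).toChild h ≠ none ∧ a h k = true

/-- Admissibility: the mechanism only matches agents active in the current market. -/
def feasible (M : Market C H) (Q : Mechanism C H) : Prop :=
  ∀ a t c h, (Q a t).toHome c = some h → M.activeC Q a c t ∧ M.activeH Q a h t

/-- Child `c` has been adopted (placement accepted) by time `t`. -/
def childAdopted (M : Market C H) (Q : Mechanism C H) (a : Actions H) (c : C) (t : ℕ) : Prop :=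
  ∃ k ≤ t, ∃ h, (Q a k).toHome c = some h ∧ a h k = true

/-- Home `h` has accepted a placement by time `t`. -/
def homeAccepted (M : Market C H) (Q : Mechanism C H) (a : Actions H) (h : H) (t : ℕ) : Prop :=
  ∃ k ≤ t, (Q a k).toChild h ≠ none ∧ a h k = true

/-- Justified envy-freeness at every period and action profile: no mutually matched
child and home both strictly prefer each other to their assigned partners. -/
def justifiedEnvyFree (M : Market C H) (Q : Mechanism C H) : Prop :=
  ∀ a t c h h' c', (Q a t).toHome c = some h' → (Q a t).toChild h = some c' →
    ¬ (M.U c h' < M.U c h ∧ M.V h c' < M.V h c)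

/-- Individual rationality at every period and action profile. -/
def individuallyRational (M : Market C H) (Q : Mechanism C H) : Prop :=
  ∀ a t c h, (Q a t).toHome c = some h → 0 ≤ M.U c h ∧ 0 ≤ M.V h c

/-- Patience-freeness: any placement offered at `t` is weakly better (time-discounted)
than the placement the home would receive at any later `t'` in the counterfactual in
which it rejects all placements before `t'` and accepts at `t'`. -/
noncomputable def patienceFree (M : Market C H) (Q : Mechanism C H) : Prop :=
  ∀ (a : Actions H) (t : ℕ) (h : H) (c : C), (Q a t).toChild h = some c →
    ∀ t' > t, ∀ c', (Q (cfProfile a h t') t').toChild h = some c' →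
      M.Vt h c' t' ≤ M.Vt h c t

/-- Dynamic envy-freeness: justified envy-free, patience-free, individually rational. -/
noncomputable def dynamicEnvyFree (M : Market C H) (Q : Mechanism C H) : Prop :=
  M.justifiedEnvyFree Q ∧ M.patienceFree Q ∧ M.individuallyRational Q

/-- Strict non-wastefulness: after every history and action profile there is never an
active unmatched child and an active unmatched home that find each other acceptable. -/
def strictlyNonWasteful (M : Market C H) (Q : Mechanism C H) : Prop :=
  ∀ a t, ¬ ∃ c h, M.activeC Q a c t ∧ M.activeH Q a h t ∧
    0 ≤ M.U c h ∧ 0 ≤ M.V h c ∧ (Q a t).toHome c = none ∧ (Q a t).toChild h = none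

/-- Weak non-wastefulness: when every home accepts every offered placement,
no mutually acceptable unmatched pair ever remains. -/
def weaklyNonWasteful (M : Market C H) (Q : Mechanism C H) : Prop :=
  ∀ t, ¬ ∃ c h, M.activeC Q (fun _ _ => true) c t ∧ M.activeH Q (fun _ _ => true) h t ∧
    0 ≤ M.U c h ∧ 0 ≤ M.V h c ∧
    (Q (fun _ _ => true) t).toHome c = none ∧ (Q (fun _ _ => true) t).toChild h = none

/-- The mechanism is a deterministic function of the history of markets (active sets)
and past matchings. -/
def historyDetermined (M : Market C H) (Q : Mechanism C H) : Prop :=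
  ∀ a a' t,
    (∀ k ≤ t, ∀ c, M.activeC Q a c k ↔ M.activeC Q a' c k) →
    (∀ k ≤ t, ∀ h, M.activeH Q a h k ↔ M.activeH Q a' h k) →
    (∀ k < t, Q a k = Q a' k) →
    Q a t = Q a' t

/-- `x` is the realized (true-utility, time-discounted) payoff of home `h`:
the time-discounted utility of an accepted placement, or `0` if `h` never accepts. -/
noncomputable def payoffIs (M : Market C H) (Q : Mechanism C H) (a : Actions H)
    (h : H) (x : ℝ) : Prop :=
  (∃ t c, (Q a t).toChild h = some c ∧ a h t = true ∧ x = M.Vt h c t) ∨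
  ((∀ t c, (Q a t).toChild h = some c → a h t = false) ∧ x = 0)

end Market

namespace Market

variable {C H : Type}

/-- `k` is the most recent period before `t` at which home `h` received placement `c`. -/
def lastPlacement (M : Market C H) (Q : Mechanism C H) (a : Actions H) (h : H)
    (t k : ℕ) (c : C) : Prop :=
  k < t ∧ (Q a k).toChild h = some c ∧ ∀ k', k < k' → k' < t → (Q a k').toChild h = none

/-- HPDA's truncation condition at time `t`: home `h` has a most recent previous
placement at `k`, and the best active child acceptable to her would give `h` strictly
larger time-discounted utility than that rejected placement. -/
noncomputable def truncatedHPDA (M : Market C H) (Q : Mechanism C H) (a : Actions H)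
    (h : H) (t : ℕ) : Prop :=
  ∃ k c, M.lastPlacement Q a h t k c ∧
    ∃ c', M.activeC Q a c' t ∧ 0 ≤ M.U c' h ∧ M.Vt h c k < M.Vt h c' t

/-- Characterization of Home Penalized Deferred Acceptance: a deterministic function of
the history that each period truncates the preferences of homes satisfying the
truncation condition (giving them no placement) and otherwise produces a matching that
is stable (individually rational and without blocking pairs) on the active agents with
respect to the truncated preferences. -/
structure IsHPDA (M : Market C H) (Q : Mechanism C H) : Prop where
  feasible : M.feasible Q
  histDet : M.historyDetermined Q
  ir : ∀ a t c h, (Q a t).toHome c = some h → 0 ≤ M.U c h ∧ 0 ≤ M.V h c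
  truncate : ∀ a t h, M.truncatedHPDA Q a h t → (Q a t).toChild h = none
  stable : ∀ a t c h, M.activeC Q a c t → M.activeH Q a h t →
    ¬ M.truncatedHPDA Q a h t → 0 ≤ M.U c h → 0 ≤ M.V h c →
    ¬ ((∀ h', (Q a t).toHome c = some h' → M.U c h' < M.U c h) ∧
       (∀ c', (Q a t).toChild h = some c' → M.V h c' < M.V h c))

end Market

/-- Theorem 2 (non-wastefulness part): HPDA is weakly non-wasteful. -/
theorem hpda_weaklyNonWasteful {C H : Type} (M : Market C H) (Q : Mechanism C H)
    (hQ : M.IsHPDA Q) : M.weaklyNonWasteful Q := by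
  intro t hex
  obtain ⟨c, h, hc, hh, hU, hV, hcn, hhn⟩ := hex
  have hnt : ¬ M.truncatedHPDA Q (fun _ _ => true) h t := by
    rintro ⟨k, c0, ⟨hk, hplace, -⟩, -⟩
    exact hh.2 ⟨k, hk, by simp [hplace], rfl⟩
  exact hQ.stable _ t c h hc hh hnt hU hV
    ⟨fun h' hh' => absurd hh' (by simp [hcn]),
     fun c' hc' => absurd hc' (by simp [hhn])⟩
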